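/- Let V ∈ E_v(q^m,n) and let u ∈ V have rank v. For any ELS's A ∈ E_a(q^m,n) and B ∈ E_{v−a}(q^m,n) with A ⊕ B = V, writing u = u_A + u_B with u_A ∈ A and u_B ∈ B, one has rk(u_A) = a and rk(u_B) = v−a. -/
import Mathlib


open scoped BigOperators

noncomputable section

/-- The rank weight of a vector over the extension field `Fqm`, with respect to the base
field `Fq`: the dimension over `Fq` of the `Fq`-span of the coordinates. -/
def rankWeight (Fq : Type) {Fqm : Type} [Field Fq] [Field Fqm] [Algebra Fq Fqm]
    {n : ℕ} (x : Fin n → Fqm) : ℕ :=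
  Module.finrank Fq (Submodule.span Fq (Set.range x))

/-- An elementary linear subspace: a subspace generated by vectors all of whose
coordinates lie in the base field `Fq`. -/
def IsELS (Fq : Type) {Fqm : Type} [Field Fq] [Field Fqm] [Algebra Fq Fqm]
    {n : ℕ} (V : Submodule Fqm (Fin n → Fqm)) : Prop :=
  ∃ S : Set (Fin n → Fqm),
    (∀ s ∈ S, ∀ i, s i ∈ Set.range (algebraMap Fq Fqm)) ∧
    V = Submodule.span Fqm S

/-- The ball of rank radius `r` centered at `c`. -/
def rankBall (Fq : Type) {Fqm : Type} [Field Fq] [Field Fqm] [Algebra Fq Fqm]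
    {n : ℕ} (r : ℕ) (c : Fin n → Fqm) : Set (Fin n → Fqm) :=
  {y | rankWeight Fq (y - c) ≤ r}

/-- `V_r(q^m, n)`: the volume of a ball of rank radius `r`. -/
def ballVol (Fq Fqm : Type) [Field Fq] [Field Fqm] [Algebra Fq Fqm]
    (n r : ℕ) : ℕ :=
  Nat.card ↥(rankBall Fq r (0 : Fin n → Fqm))

/-- `K_R(q^m, n, ρ)`: minimum cardinality of a nonempty code of length `n` with rank
covering radius at most `ρ`. -/
def coveringNumber (Fq Fqm : Type) [Field Fq] [Field Fqm] [Algebra Fq Fqm]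
    (n ρ : ℕ) : ℕ :=
  sInf {k : ℕ | ∃ C : Finset (Fin n → Fqm), C.Nonempty ∧
    (∀ x : Fin n → Fqm, ∃ c ∈ C, rankWeight Fq (x - c) ≤ ρ) ∧ C.card = k}

/-- `σ(q) = (1/ln q) Σ_{k≥1} 1/(k(q^k - 1))`. -/
def sigmaQ (q : ℕ) : ℝ :=
  (1 / Real.log q) * ∑' k : ℕ, 1 / (((k : ℝ) + 1) * ((q : ℝ) ^ (k + 1) - 1))

/-- `α(e, u) = ∏_{i=0}^{u-1} (q^e - q^i)` (with integer exponent `e`). -/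
def alphaQ (q : ℕ) (e : ℤ) (u : ℕ) : ℚ :=
  ∏ i ∈ Finset.range u, ((q : ℚ) ^ e - (q : ℚ) ^ i)

/-- The Gaussian binomial `[n u]_q = α(n,u)/α(u,u)`. -/
def gaussQ (q n u : ℕ) : ℚ := alphaQ q n u / alphaQ q u u


/-- The rank weight of an element of an ELS is at most the dimension of the ELS. -/
lemma rankWeight_le_of_mem_els (Fq : Type) {Fqm : Type} [Field Fq] [Fintype Fq] [Field Fqm]
    [Fintype Fqm] [Algebra Fq Fqm] {n : ℕ} {V : Submodule Fqm (Fin n → Fqm)}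
    (hV : IsELS Fq V) {x : Fin n → Fqm} (hx : x ∈ V) :
    rankWeight Fq x ≤ Module.finrank Fqm V := by
  classical
  obtain ⟨S, hS, rfl⟩ := hV
  obtain ⟨t, htS, htspan, htind⟩ := exists_linearIndependent Fqm S
  have hxt : x ∈ Submodule.span Fqm t := htspan ▸ hx
  rw [Submodule.mem_span_set] at hxt
  obtain ⟨c, hcsupp, hcsum⟩ := hxt
  have htfin : t.Finite := htind.setFinite
  haveI : Fintype t := htfin.fintype
  have hcard : Module.finrank Fqm (Submodule.span Fqm S) = t.toFinset.card := by
    rw [← htspan, finrank_span_set_eq_card htind]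
  -- the coefficient set
  set F : Finset Fqm := c.support.image c with hF
  have hrange : Set.range x ⊆ (Submodule.span Fq (F : Set Fqm) : Set Fqm) := by
    rintro _ ⟨j, rfl⟩
    have hxj : x j = ∑ w ∈ c.support, c w * w j := by
      rw [← hcsum]
      simp [Finsupp.sum, Finset.sum_apply]
    rw [hxj]
    apply Submodule.sum_mem
    intro w hw
    have hwS : w ∈ S := htS (hcsupp hw)
    obtain ⟨lam, hlam⟩ := hS w hwS j
    have : c w * w j = lam • c w := by
      rw [← hlam, Algebra.smul_def, mul_comm]
    rw [this]
    exact Submodule.smul_mem _ _ (Submodule.subset_span (Finset.mem_image_of_mem c hw))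
  calc rankWeight Fq x ≤ Module.finrank Fq (Submodule.span Fq (F : Set Fqm)) := by
        haveI : FiniteDimensional Fq Fqm := Module.Finite.of_finite (R := Fq) (M := Fqm)
        exact Submodule.finrank_mono (Submodule.span_le.mpr hrange)
    _ ≤ F.card := finrank_span_finset_le_card F
    _ ≤ c.support.card := Finset.card_image_le
    _ ≤ t.toFinset.card := Finset.card_le_card (fun w hw => Set.mem_toFinset.mpr (hcsupp hw))
    _ = Module.finrank Fqm (Submodule.span Fqm S) := hcard.symm

/-- Rank weight is subadditive. -/
lemma rankWeight_add_le (Fq : Type) {Fqm : Type} [Field Fq] [Fintype Fq] [Field Fqm]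
    [Fintype Fqm] [Algebra Fq Fqm] {n : ℕ} (x y : Fin n → Fqm) :
    rankWeight Fq (x + y) ≤ rankWeight Fq x + rankWeight Fq y := by
  classical
  haveI : FiniteDimensional Fq Fqm := Module.Finite.of_finite (R := Fq) (M := Fqm)
  have hle : Submodule.span Fq (Set.range (x + y)) ≤
      Submodule.span Fq (Set.range x) ⊔ Submodule.span Fq (Set.range y) := by
    rw [Submodule.span_le]
    rintro _ ⟨j, rfl⟩
    exact Submodule.add_mem_sup (Submodule.subset_span ⟨j, rfl⟩)
      (Submodule.subset_span ⟨j, rfl⟩)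
  exact (Submodule.finrank_mono hle).trans
    (Submodule.finrank_add_le_finrank_add_finrank _ _)

/-- Projections of a full-rank vector of an ELS onto complementary ELS's have full rank. -/
theorem stmt2 (q m n v a : ℕ) (Fq Fqm : Type) [Field Fq] [Fintype Fq] [Field Fqm] [Fintype Fqm]
    [Algebra Fq Fqm] (hq : Fintype.card Fq = q) (hm : Module.finrank Fq Fqm = m)
    (ha : a ≤ v)
    (V A B : Submodule Fqm (Fin n → Fqm))
    (hV : IsELS Fq V) (hVdim : Module.finrank Fqm V = v)
    (hA : IsELS Fq A) (hAdim : Module.finrank Fqm A = a)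
    (hB : IsELS Fq B) (hBdim : Module.finrank Fqm B = v - a)
    (hdisj : Disjoint A B) (hsup : A ⊔ B = V)
    (u uA uB : Fin n → Fqm) (hu : u ∈ V) (hur : rankWeight Fq u = v)
    (huA : uA ∈ A) (huB : uB ∈ B) (hsum : u = uA + uB) :
    rankWeight Fq uA = a ∧ rankWeight Fq uB = v - a := by
  have h1 : rankWeight Fq uA ≤ a := hAdim ▸ rankWeight_le_of_mem_els Fq hA huA
  have h2 : rankWeight Fq uB ≤ v - a := hBdim ▸ rankWeight_le_of_mem_els Fq hB huB
  have h3 : v ≤ rankWeight Fq uA + rankWeight Fq uB := by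
    rw [← hur, hsum]; exact rankWeight_add_le Fq uA uB
  omega

end
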